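/- For the Lie algebra VI₀ with nonzero brackets [X₁,X₃] = X₂, [X₂,X₃] = X₁, the element r = X₁∧X₃ + X₂∧X₃ with X₀ = −X₁ − X₂ satisfies [r,r] = 2·X₀∧r, so the pair (r, X₀) is an algebraic Jacobi structure on VI₀. -/

import Mathlib

open scoped BigOperators

/-- The Levi-Civita symbol on `Fin 3`: the coefficient of `X_i∧X_j∧X_k`
with respect to the volume element `X₁∧X₂∧X₃`. -/
def eps (i j k : Fin 3) : ℝ :=
  Matrix.det (Matrix.of ![(Pi.single i 1 : Fin 3 → ℝ), Pi.single j 1, Pi.single k 1])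

/-- Coefficient (w.r.t. `X₁∧X₂∧X₃`) of the Schouten–Nijenhuis bracket `[P,Q]`
of two bivectors `P = ½P^{ab}X_a∧X_b`, `Q = ½Q^{cd}X_c∧X_d` on a Lie algebra
with structure constants `f`: `[P,Q] = P^{ab}Q^{cd} f_{ac}^e X_e∧X_b∧X_d`. -/
def schouten (f : Fin 3 → Fin 3 → Fin 3 → ℝ) (P Q : Matrix (Fin 3) (Fin 3) ℝ) : ℝ :=
  ∑ a, ∑ b, ∑ c, ∑ d, ∑ e, P a b * Q c d * f a c e * eps e b d

/-- Coefficient of the trivector `X₀ ∧ r` for a vector `x` and a bivector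
`r = ½ r^{bd} X_b∧X_d`. -/
noncomputable def wedgeVec (x : Fin 3 → ℝ) (P : Matrix (Fin 3) (Fin 3) ℝ) : ℝ :=
  (1 / 2) * ∑ a, ∑ b, ∑ d, x a * P b d * eps a b d

/-- Components of the Schouten bracket `[X₀, r]` of a vector with a bivector. -/
def lieVecBiv (f : Fin 3 → Fin 3 → Fin 3 → ℝ) (x : Fin 3 → ℝ)
    (P : Matrix (Fin 3) (Fin 3) ℝ) : Matrix (Fin 3) (Fin 3) ℝ :=
  Matrix.of fun i j => ∑ a, ∑ b, x a * (f a b i * P b j - f a b j * P b i)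

/-- Structure constants of the Lie algebra `VI₀`:
`[X₁,X₃] = X₂`, `[X₂,X₃] = X₁`. -/
def fVI0 : Fin 3 → Fin 3 → Fin 3 → ℝ :=
  ![![![0,0,0], ![0,0,0], ![0,1,0]],
    ![![0,0,0], ![0,0,0], ![1,0,0]],
    ![![0,-1,0], ![-1,0,0], ![0,0,0]]]

/-- In the Lie algebra `VI₀`, the element `r = X₁∧X₃ + X₂∧X₃` with
`X₀ = −X₁ − X₂` satisfies `[r,r] = 2·X₀∧r`, so `(r, X₀)` is an algebraic
Jacobi structure on `VI₀`. -/
theorem VI0_algebraic_jacobi :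
    schouten fVI0 !![0,0,1; 0,0,1; -1,-1,0] !![0,0,1; 0,0,1; -1,-1,0]
      = 2 * wedgeVec ![-1,-1,0] !![0,0,1; 0,0,1; -1,-1,0] := by
  simp only [schouten, wedgeVec, eps, fVI0, Fin.sum_univ_succ, Fin.sum_univ_zero,
    Matrix.det_fin_three, Matrix.of_apply, Matrix.cons_val', Matrix.cons_val_zero,
    Matrix.cons_val_one, Matrix.head_cons, Matrix.empty_val', Matrix.cons_val_fin_one,
    Matrix.head_fin_const, Pi.single_apply]
  norm_num [Matrix.cons_val_two, Matrix.vecHead, Matrix.vecTail, Fin.ext_iff]
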